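/- Let k ≥ 3 be an integer, let D be a loopless digraph on a finite vertex set V, and let A, B be disjoint nonempty subsets of V such that no two vertices of A ∪ B are joined by an arc in either direction, all vertices of A have identical out-neighborhoods and identical in-neighborhoods, and all vertices of B have identical out-neighborhoods and identical in-neighborhoods. Fix a ∈ A and b ∈ B, and define digraphs D_A and D_B on V by D_A.Adj u w ↔ D.Adj (r_A u) (r_A w) where r_A u = a if u ∈ B and r_A u = u otherwise, and D_B.Adj u w ↔ D.Adj (r_B u) (r_B w) where r_B u = b if u ∈ A and r_B u = u otherwise. Then the number of k-subsets of V inducing a copy of S⃗_k in D is at most the maximum of the corresponding numbers for D_A and for D_B. -/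

import Mathlib

open scoped Classical

/-- The number of `k`-element vertex subsets of the digraph `D` (given by its arc
relation) that induce a copy of the directed star `S⃗ₖ`. -/
noncomputable def starCount (k : ℕ) {V : Type} [Fintype V] (D : V → V → Prop) : ℕ :=
  {S : Finset V | S.card = k ∧
    ∃ v ∈ S, ∀ u ∈ S, ∀ w ∈ S, (D u w ↔ (u = v ∧ w ≠ v))}.ncard

namespace MergeAux
open Finset
set_option linter.unusedSectionVars false

variable {V : Type} [Fintype V]

def IsStar (D : V → V → Prop) (S : Finset V) : Prop :=
  ∃ v ∈ S, ∀ u ∈ S, ∀ w ∈ S, (D u w ↔ (u = v ∧ w ≠ v))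

noncomputable def fib (k : ℕ) (D : V → V → Prop) (E T : Finset V) : Finset (Finset V) :=
  (univ.filter (fun S : Finset V => S.card = k ∧ IsStar D S)).filter (fun S => S \ E = T)

lemma mem_fib {k : ℕ} {D : V → V → Prop} {E T S : Finset V} :
    S ∈ fib k D E T ↔ S.card = k ∧ IsStar D S ∧ S \ E = T := by
  simp [fib, Finset.mem_filter, and_assoc]

lemma starCount_eq_sum (k : ℕ) (D : V → V → Prop) (E : Finset V) :
    starCount k D = ∑ T : Finset V, (fib k D E T).card := by
  rw [starCount, Set.ncard_eq_toFinset_card']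
  rw [show {S : Finset V | S.card = k ∧
      ∃ v ∈ S, ∀ u ∈ S, ∀ w ∈ S, (D u w ↔ (u = v ∧ w ≠ v))}.toFinset
      = univ.filter (fun S : Finset V => S.card = k ∧ IsStar D S) from by
    ext S; rw [Set.mem_toFinset, Finset.mem_filter_univ]; rfl]
  exact Finset.card_eq_sum_card_fiberwise (fun S _ => mem_univ (S \ E))

lemma n_mul_choose_le {m n : ℕ} (h : m ≤ n) (γ : ℕ) :
    n * m.choose (γ + 1) ≤ m * n.choose (γ + 1) := by
  induction γ with
  | zero => simp [Nat.choose_one_right, Nat.mul_comm]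
  | succ γ ih =>
    have h1 : m.choose (γ + 2) * (γ + 2) = m.choose (γ + 1) * (m - (γ + 1)) :=
      Nat.choose_succ_right_eq m (γ + 1)
    have h2 : n.choose (γ + 2) * (γ + 2) = n.choose (γ + 1) * (n - (γ + 1)) :=
      Nat.choose_succ_right_eq n (γ + 1)
    have key : n * m.choose (γ + 2) * (γ + 2) ≤ m * n.choose (γ + 2) * (γ + 2) := by
      calc n * m.choose (γ + 2) * (γ + 2) = n * (m.choose (γ + 2) * (γ + 2)) := by ring
        _ = n * (m.choose (γ + 1) * (m - (γ + 1))) := by rw [h1]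
        _ = (n * m.choose (γ + 1)) * (m - (γ + 1)) := by ring
        _ ≤ (m * n.choose (γ + 1)) * (m - (γ + 1)) := Nat.mul_le_mul_right _ ih
        _ ≤ (m * n.choose (γ + 1)) * (n - (γ + 1)) := by
            exact Nat.mul_le_mul_left _ (Nat.sub_le_sub_right h _)
        _ = m * (n.choose (γ + 1) * (n - (γ + 1))) := by ring
        _ = m * (n.choose (γ + 2) * (γ + 2)) := by rw [h2]
        _ = m * n.choose (γ + 2) * (γ + 2) := by ring
    exact Nat.le_of_mul_le_mul_right key (by omega)

def Phi (D : V → V → Prop) (k : ℕ) (a : V) (T : Finset V) : Prop :=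
  (∃ v ∈ T, (∀ u ∈ T, ∀ w ∈ T, (D u w ↔ (u = v ∧ w ≠ v))) ∧ D v a ∧
      (∀ u ∈ T, ¬ D a u) ∧ (∀ u ∈ T, u ≠ v → ¬ D u a))
  ∨ (T.card + 1 = k ∧ (∀ w ∈ T, D a w) ∧ (∀ u ∈ T, ∀ w ∈ T, ¬ D u w) ∧ (∀ u ∈ T, ¬ D u a))

lemma extract (D : V → V → Prop) (A B : Set V) (a : V) (ha : a ∈ A) (k : ℕ)
    (hnoarc : ∀ u, (u ∈ A ∨ u ∈ B) → ∀ w, (w ∈ A ∨ w ∈ B) → ¬ D u w)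
    (hAout : ∀ u ∈ A, ∀ v ∈ A, ∀ w, D u w ↔ D v w)
    (hAin : ∀ u ∈ A, ∀ v ∈ A, ∀ w, D w u ↔ D w v)
    (E : Finset V) (hE : ∀ x, x ∈ E ↔ (x ∈ A ∨ x ∈ B))
    (S : Finset V) (hSk : S.card = k) (hstar : IsStar D S)
    (x : V) (hx : x ∈ S) (hxA : x ∈ A) :
    Phi D k a (S \ E) := by
  obtain ⟨v, hv, hst⟩ := hstar
  by_cases hvE : v ∈ E
  · -- center inside E : S ∩ E = {v}, v ∈ A
    have hSE : ∀ w ∈ S, w ∈ E → w = v := by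
      intro w hw hwE
      by_contra hne
      exact hnoarc v ((hE v).1 hvE) w ((hE w).1 hwE) ((hst v hv w hw).2 ⟨rfl, hne⟩)
    have hxv : x = v := hSE x hx ((hE x).2 (Or.inl hxA))
    have hvA : v ∈ A := hxv ▸ hxA
    right
    refine ⟨?_, ?_, ?_, ?_⟩
    · have h1 : S ∩ E = {v} := by
        apply Finset.Subset.antisymm
        · intro w hw
          have hw' := Finset.mem_inter.1 hw
          simp [hSE w hw'.1 hw'.2]
        · intro w hw
          rw [Finset.mem_singleton] at hw
          subst hw
          exact Finset.mem_inter.2 ⟨hv, hvE⟩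
      have h2 := Finset.card_inter_add_card_sdiff S E
      rw [h1] at h2
      simp only [Finset.card_singleton] at h2
      omega
    · intro w hw
      obtain ⟨hwS, hwE⟩ := Finset.mem_sdiff.1 hw
      have hwv : w ≠ v := fun h => hwE (h ▸ hvE)
      exact (hAout a ha v hvA w).2 ((hst v hv w hwS).2 ⟨rfl, hwv⟩)
    · intro u hu w hw hD
      obtain ⟨huS, huE⟩ := Finset.mem_sdiff.1 hu
      have huv : u ≠ v := fun h => huE (h ▸ hvE)
      exact huv ((hst u huS w (Finset.mem_sdiff.1 hw).1).1 hD).1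
    · intro u hu hD
      obtain ⟨huS, huE⟩ := Finset.mem_sdiff.1 hu
      have h1 : D u v := (hAin a ha v hvA u).1 hD
      exact ((hst u huS v hv).1 h1).2 rfl
  · -- center outside E
    left
    have hvT : v ∈ S \ E := Finset.mem_sdiff.2 ⟨hv, hvE⟩
    have hxv : x ≠ v := fun h => hvE ((hE v).2 (Or.inl (h ▸ hxA)))
    refine ⟨v, hvT, ?_, ?_, ?_, ?_⟩
    · intro u hu w hw
      exact hst u (Finset.mem_sdiff.1 hu).1 w (Finset.mem_sdiff.1 hw).1
    · exact (hAin x hxA a ha v).1 ((hst v hv x hx).2 ⟨rfl, hxv⟩)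
    · intro u hu hD
      have h1 : D x u := (hAout a ha x hxA u).1 hD
      exact hxv ((hst x hx u (Finset.mem_sdiff.1 hu).1).1 h1).1
    · intro u hu huv hD
      have h1 : D u x := (hAin a ha x hxA u).1 hD
      exact huv ((hst u (Finset.mem_sdiff.1 hu).1 x hx).1 h1).1

lemma build (D : V → V → Prop) (A B : Set V) (hdisj : Disjoint A B) (a : V) (ha : a ∈ A) (k : ℕ)
    (hnoarc : ∀ u, (u ∈ A ∨ u ∈ B) → ∀ w, (w ∈ A ∨ w ∈ B) → ¬ D u w)
    (hAout : ∀ u ∈ A, ∀ v ∈ A, ∀ w, D u w ↔ D v w)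
    (hAin : ∀ u ∈ A, ∀ v ∈ A, ∀ w, D w u ↔ D w v)
    (E : Finset V) (hE : ∀ x, x ∈ E ↔ (x ∈ A ∨ x ∈ B))
    (T : Finset V) (hTE : T ∩ E = ∅) (hTk : T.card < k)
    (hPhi : Phi D k a T)
    (W : Finset V) (hWE : W ⊆ E) (hWc : W.card = k - T.card) :
    (T ∪ W).card = k ∧ (T ∪ W) \ E = T ∧
      IsStar (fun u w => D (if u ∈ B then a else u) (if w ∈ B then a else w)) (T ∪ W) := by
  set r : V → V := fun u => if u ∈ B then a else u with hr
  have hT' : ∀ u ∈ T, u ∉ E := fun u hu hue =>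
    (Finset.eq_empty_iff_forall_notMem.1 hTE u) (Finset.mem_inter.2 ⟨hu, hue⟩)
  have hrA : ∀ u ∈ E, r u ∈ A := by
    intro u hu
    rcases (hE u).1 hu with h | h
    · have : u ∉ B := Set.disjoint_left.1 hdisj h
      simp only [hr, if_neg this]; exact h
    · simp only [hr, if_pos h]; exact ha
  have hrT : ∀ u, u ∉ E → r u = u := by
    intro u hu
    have : u ∉ B := fun h => hu ((hE u).2 (Or.inr h))
    simp [hr, this]
  have hdTW : Disjoint T W := by
    rw [Finset.disjoint_left]
    exact fun u hu hw => hT' u hu (hWE hw)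
  have hcard : (T ∪ W).card = k := by
    rw [Finset.card_union_of_disjoint hdTW, hWc]; omega
  have hsd : (T ∪ W) \ E = T := by
    ext u
    simp only [Finset.mem_sdiff, Finset.mem_union]
    constructor
    · rintro ⟨h1 | h1, h2⟩
      · exact h1
      · exact absurd (hWE h1) h2
    · intro h; exact ⟨Or.inl h, hT' u h⟩
  refine ⟨hcard, hsd, ?_⟩
  rcases hPhi with ⟨v, hvT, hcore, hva, hnoA1, hnoA2⟩ | ⟨hc1, hall, hnone, hback⟩
  · refine ⟨v, Finset.mem_union_left _ hvT, ?_⟩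
    intro u hu w hw
    rcases Finset.mem_union.1 hu with huT | huW <;> rcases Finset.mem_union.1 hw with hwT | hwW
    · show D (r u) (r w) ↔ _
      rw [hrT u (hT' u huT), hrT w (hT' w hwT)]
      exact hcore u huT w hwT
    · -- u ∈ T, w ∈ W
      show D (r u) (r w) ↔ _
      rw [hrT u (hT' u huT)]
      have hwv : w ≠ v := fun h => hT' v hvT (h ▸ hWE hwW)
      have h1 : D u (r w) ↔ D u a := hAin (r w) (hrA w (hWE hwW)) a ha u
      rw [h1]
      constructor
      · intro hD
        refine ⟨?_, hwv⟩
        by_contra hne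
        exact hnoA2 u huT hne hD
      · rintro ⟨rfl, _⟩; exact hva
    · -- u ∈ W, w ∈ T
      show D (r u) (r w) ↔ _
      rw [hrT w (hT' w hwT)]
      have huv : u ≠ v := fun h => hT' v hvT (h ▸ hWE huW)
      have h1 : D (r u) w ↔ D a w := hAout (r u) (hrA u (hWE huW)) a ha w
      rw [h1]
      simp only [huv, false_and, iff_false]
      exact hnoA1 w hwT
    · -- both in W
      show D (r u) (r w) ↔ _
      have huv : u ≠ v := fun h => hT' v hvT (h ▸ hWE huW)
      simp only [huv, false_and, iff_false]
      exact hnoarc _ (Or.inl (hrA u (hWE huW))) _ (Or.inl (hrA w (hWE hwW)))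
  · -- singleton case
    have hW1 : W.card = 1 := by omega
    obtain ⟨w₀, hw₀⟩ := Finset.card_eq_one.1 hW1
    subst hw₀
    have hw₀E : w₀ ∈ E := hWE (Finset.mem_singleton_self w₀)
    refine ⟨w₀, Finset.mem_union_right _ (Finset.mem_singleton_self w₀), ?_⟩
    intro u hu w hw
    rcases Finset.mem_union.1 hu with huT | huW <;> rcases Finset.mem_union.1 hw with hwT | hwW
    · show D (r u) (r w) ↔ _
      rw [hrT u (hT' u huT), hrT w (hT' w hwT)]
      have huw : u ≠ w₀ := fun h => hT' u huT (h ▸ hw₀E)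
      simp only [huw, false_and, iff_false]
      exact hnone u huT w hwT
    · -- u ∈ T, w = w₀
      rw [Finset.mem_singleton] at hwW
      show D (r u) (r w) ↔ _
      rw [hrT u (hT' u huT)]
      have huw : u ≠ w₀ := fun h => hT' u huT (h ▸ hw₀E)
      have h1 : D u (r w) ↔ D u a := by
        rw [hwW]; exact hAin (r w₀) (hrA w₀ hw₀E) a ha u
      rw [h1, hwW]
      simp only [huw, false_and, iff_false]
      exact hback u huT
    · -- u = w₀, w ∈ T
      rw [Finset.mem_singleton] at huW
      show D (r u) (r w) ↔ _
      rw [hrT w (hT' w hwT)]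
      have hww : w ≠ w₀ := fun h => hT' w hwT (h ▸ hw₀E)
      have h1 : D (r u) w ↔ D a w := by
        rw [huW]; exact hAout (r w₀) (hrA w₀ hw₀E) a ha w
      rw [h1, huW]
      have := hall w hwT
      simp [this, hww]
    · -- u = w₀, w = w₀
      rw [Finset.mem_singleton] at huW hwW
      show D (r u) (r w) ↔ _
      rw [huW, hwW]
      simp only [ne_eq, not_true_eq_false, and_false, iff_false]
      exact hnoarc _ (Or.inl (hrA w₀ hw₀E)) _ (Or.inl (hrA w₀ hw₀E))
lemma fib_le (k : ℕ) (D : V → V → Prop) (E F T : Finset V)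
    (hsub : ∀ S ∈ fib k D E T, S ∩ E ⊆ F) :
    (fib k D E T).card ≤ F.card.choose (k - T.card) := by
  rw [← Finset.card_powersetCard]
  apply Finset.card_le_card_of_injOn (fun S => S ∩ E)
  · intro S hS
    obtain ⟨h1, _, h3⟩ := mem_fib.1 hS
    simp only [Finset.mem_coe, Finset.mem_powersetCard]
    refine ⟨hsub S hS, ?_⟩
    have h2 := Finset.card_inter_add_card_sdiff S E
    have h4 : T ⊆ S := h3 ▸ Finset.sdiff_subset
    have h5 : T.card ≤ S.card := Finset.card_le_card h4
    rw [h3] at h2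
    omega
  · intro S₁ h₁ S₂ h₂ heq
    simp only [Finset.mem_coe] at h₁ h₂
    obtain ⟨_, _, e₁⟩ := mem_fib.1 h₁
    obtain ⟨_, _, e₂⟩ := mem_fib.1 h₂
    have heq' : S₁ ∩ E = S₂ ∩ E := heq
    have : S₁ = T ∪ (S₁ ∩ E) := by rw [← e₁, Finset.sdiff_union_inter]
    rw [this, heq', ← e₂, Finset.sdiff_union_inter]

lemma fib_ge (k : ℕ) (D' : V → V → Prop) (E T : Finset V) (hTE : T ∩ E = ∅)
    (hbuild : ∀ W ⊆ E, W.card = k - T.card →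
      ((T ∪ W).card = k ∧ (T ∪ W) \ E = T ∧ IsStar D' (T ∪ W))) :
    E.card.choose (k - T.card) ≤ (fib k D' E T).card := by
  rw [← Finset.card_powersetCard]
  apply Finset.card_le_card_of_injOn (fun W => T ∪ W)
  · intro W hW
    simp only [Finset.mem_coe, Finset.mem_powersetCard] at hW
    obtain ⟨h1, h2, h3⟩ := hbuild W hW.1 hW.2
    exact mem_fib.2 ⟨h1, h3, h2⟩
  · intro W₁ h₁ W₂ h₂ heq
    simp only [Finset.mem_coe, Finset.mem_powersetCard] at h₁ h₂
    have e : ∀ W : Finset V, W ⊆ E → (T ∪ W) ∩ E = W := by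
      intro W hWE
      rw [Finset.union_inter_distrib_right, hTE, Finset.inter_eq_left.2 hWE,
        Finset.empty_union]
    have heq' : T ∪ W₁ = T ∪ W₂ := heq
    rw [← e W₁ h₁.1, heq', e W₂ h₂.1]

lemma fib_congr (k : ℕ) (D₁ D₂ : V → V → Prop) (E T : Finset V)
    (h : ∀ u ∈ T, ∀ w ∈ T, (D₁ u w ↔ D₂ u w)) (hk : k ≤ T.card) :
    fib k D₁ E T = fib k D₂ E T := by
  have main : ∀ (D₁ D₂ : V → V → Prop), (∀ u ∈ T, ∀ w ∈ T, (D₁ u w ↔ D₂ u w)) →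
      fib k D₁ E T ⊆ fib k D₂ E T := by
    intro D₁ D₂ h S hS
    obtain ⟨h1, hstar, h3⟩ := mem_fib.1 hS
    have hTS : T ⊆ S := h3 ▸ Finset.sdiff_subset
    have hST : S = T := by
      apply (Finset.eq_of_subset_of_card_le hTS (by omega)).symm
    subst hST
    refine mem_fib.2 ⟨h1, ?_, h3⟩
    obtain ⟨v, hv, hst⟩ := hstar
    exact ⟨v, hv, fun u hu w hw => (h u hu w hw).symm.trans (hst u hu w hw)⟩
  exact Finset.Subset.antisymm (main D₁ D₂ h)
    (main D₂ D₁ (fun u hu w hw => (h u hu w hw).symm))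

lemma fib_empty (k : ℕ) (D' : V → V → Prop) (E T : Finset V) (h : T ∩ E ≠ ∅) :
    fib k D' E T = ∅ := by
  rw [Finset.eq_empty_iff_forall_notMem]
  intro S hS
  obtain ⟨_, _, h3⟩ := mem_fib.1 hS
  exact h (by rw [← h3]; exact Finset.sdiff_inter_self E S)


end MergeAux

/-- Merging two equivalence classes with no arcs between them does not decrease
the number of induced copies of `S⃗ₖ` for one of the two ways of merging. -/
theorem merge_classes {V : Type} [Fintype V] (k : ℕ) (hk : 3 ≤ k)
    (D : V → V → Prop) (hloop : ∀ v, ¬ D v v)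
    (A B : Set V) (hdisj : Disjoint A B) (hA : A.Nonempty) (hB : B.Nonempty)
    (hnoarc : ∀ u ∈ A ∪ B, ∀ w ∈ A ∪ B, ¬ D u w)
    (hAout : ∀ u ∈ A, ∀ v ∈ A, ∀ w, D u w ↔ D v w)
    (hAin : ∀ u ∈ A, ∀ v ∈ A, ∀ w, D w u ↔ D w v)
    (hBout : ∀ u ∈ B, ∀ v ∈ B, ∀ w, D u w ↔ D v w)
    (hBin : ∀ u ∈ B, ∀ v ∈ B, ∀ w, D w u ↔ D w v)
    (a : V) (ha : a ∈ A) (b : V) (hb : b ∈ B) :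
    starCount k D ≤
      max
        (starCount k (fun u w =>
          D (if u ∈ B then a else u) (if w ∈ B then a else w)))
        (starCount k (fun u w =>
          D (if u ∈ A then b else u) (if w ∈ A then b else w))) := by
  classical
  open MergeAux Finset in
  set DA : V → V → Prop :=
    (fun u w => D (if u ∈ B then a else u) (if w ∈ B then a else w)) with hDA
  set DB : V → V → Prop :=
    (fun u w => D (if u ∈ A then b else u) (if w ∈ A then b else w)) with hDB
  set FA : Finset V := univ.filter (· ∈ A) with hFA
  set FB : Finset V := univ.filter (· ∈ B) with hFB
  set E : Finset V := FA ∪ FB with hEdef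
  set nA : ℕ := FA.card with hnAdef
  set nB : ℕ := FB.card with hnBdef
  have hE : ∀ x, x ∈ E ↔ (x ∈ A ∨ x ∈ B) := by
    intro x; simp [hEdef, hFA, hFB]
  have hE' : ∀ x, x ∈ E ↔ (x ∈ B ∨ x ∈ A) := fun x => (hE x).trans or_comm
  have hnoarc' : ∀ u, (u ∈ A ∨ u ∈ B) → ∀ w, (w ∈ A ∨ w ∈ B) → ¬ D u w := by
    intro u hu w hw
    exact hnoarc u hu w hw
  have hnoarc'' : ∀ u, (u ∈ B ∨ u ∈ A) → ∀ w, (w ∈ B ∨ w ∈ A) → ¬ D u w :=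
    fun u hu w hw => hnoarc' u hu.symm w hw.symm
  have hFdisj : Disjoint FA FB := by
    rw [Finset.disjoint_left]
    intro x hx h2
    exact Set.disjoint_left.1 hdisj (Finset.mem_filter.1 hx).2 (Finset.mem_filter.1 h2).2
  have hEcard : E.card = nA + nB := Finset.card_union_of_disjoint hFdisj
  have hnA : 0 < nA := by
    obtain ⟨x, hx⟩ := hA
    exact Finset.card_pos.2 ⟨x, Finset.mem_filter.2 ⟨Finset.mem_univ _, hx⟩⟩
  have hnB : 0 < nB := by
    obtain ⟨x, hx⟩ := hB
    exact Finset.card_pos.2 ⟨x, Finset.mem_filter.2 ⟨Finset.mem_univ _, hx⟩⟩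
  have key : ∀ T : Finset V,
      (nA + nB) * (fib k D E T).card ≤
        nA * (fib k DA E T).card + nB * (fib k DB E T).card := by
    intro T
    by_cases hTE : T ∩ E = ∅
    · by_cases hTk : T.card < k
      · -- main case
        have lowA : Phi D k a T → E.card.choose (k - T.card) ≤ (fib k DA E T).card := by
          intro hP
          exact fib_ge k DA E T hTE (fun W hWE hWc =>
            build D A B hdisj a ha k hnoarc' hAout hAin E hE T hTE hTk hP W hWE hWc)
        have lowB : Phi D k b T → E.card.choose (k - T.card) ≤ (fib k DB E T).card := by
          intro hP
          exact fib_ge k DB E T hTE (fun W hWE hWc =>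
            build D B A hdisj.symm b hb k hnoarc'' hBout hBin E hE' T hTE hTk hP W hWE hWc)
        have extA : ∀ S ∈ fib k D E T, ∀ x ∈ S, x ∈ A → Phi D k a T := by
          intro S hS x hxS hxA
          obtain ⟨h1, h2, h3⟩ := mem_fib.1 hS
          have := extract D A B a ha k hnoarc' hAout hAin E hE S h1 h2 x hxS hxA
          rwa [h3] at this
        have extB : ∀ S ∈ fib k D E T, ∀ x ∈ S, x ∈ B → Phi D k b T := by
          intro S hS x hxS hxB
          obtain ⟨h1, h2, h3⟩ := mem_fib.1 hS
          have := extract D B A b hb k hnoarc'' hBout hBin E hE' S h1 h2 x hxS hxB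
          rwa [h3] at this
        by_cases hPA : Phi D k a T <;> by_cases hPB : Phi D k b T
        · -- both
          have dle : (fib k D E T).card ≤ E.card.choose (k - T.card) :=
            fib_le k D E E T (fun S _ => Finset.inter_subset_right)
          calc (nA + nB) * (fib k D E T).card
              ≤ (nA + nB) * E.card.choose (k - T.card) := Nat.mul_le_mul_left _ dle
            _ = nA * E.card.choose (k - T.card) + nB * E.card.choose (k - T.card) := by
                rw [Nat.add_mul]
            _ ≤ nA * (fib k DA E T).card + nB * (fib k DB E T).card :=
                Nat.add_le_add (Nat.mul_le_mul_left _ (lowA hPA)) (Nat.mul_le_mul_left _ (lowB hPB))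
        · -- A only
          have hsub : ∀ S ∈ fib k D E T, S ∩ E ⊆ FA := by
            intro S hS y hy
            obtain ⟨hyS, hyE⟩ := Finset.mem_inter.1 hy
            rcases (hE y).1 hyE with h | h
            · exact Finset.mem_filter.2 ⟨Finset.mem_univ _, h⟩
            · exact absurd (extB S hS y hyS h) hPB
          have dle : (fib k D E T).card ≤ nA.choose (k - T.card) :=
            fib_le k D E FA T hsub
          obtain ⟨γ', hγ'⟩ : ∃ γ', k - T.card = γ' + 1 := ⟨k - T.card - 1, by omega⟩
          have bin : (nA + nB) * nA.choose (γ' + 1) ≤ nA * (nA + nB).choose (γ' + 1) :=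
            n_mul_choose_le (Nat.le_add_right _ _) γ'
          calc (nA + nB) * (fib k D E T).card
              ≤ (nA + nB) * nA.choose (k - T.card) := Nat.mul_le_mul_left _ dle
            _ ≤ nA * (nA + nB).choose (k - T.card) := by rw [hγ']; exact bin
            _ = nA * E.card.choose (k - T.card) := by rw [hEcard]
            _ ≤ nA * (fib k DA E T).card := Nat.mul_le_mul_left _ (lowA hPA)
            _ ≤ nA * (fib k DA E T).card + nB * (fib k DB E T).card := Nat.le_add_right _ _
        · -- B only
          have hsub : ∀ S ∈ fib k D E T, S ∩ E ⊆ FB := by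
            intro S hS y hy
            obtain ⟨hyS, hyE⟩ := Finset.mem_inter.1 hy
            rcases (hE y).1 hyE with h | h
            · exact absurd (extA S hS y hyS h) hPA
            · exact Finset.mem_filter.2 ⟨Finset.mem_univ _, h⟩
          have dle : (fib k D E T).card ≤ nB.choose (k - T.card) :=
            fib_le k D E FB T hsub
          obtain ⟨γ', hγ'⟩ : ∃ γ', k - T.card = γ' + 1 := ⟨k - T.card - 1, by omega⟩
          have bin : (nA + nB) * nB.choose (γ' + 1) ≤ nB * (nA + nB).choose (γ' + 1) :=
            n_mul_choose_le (Nat.le_add_left _ _) γ'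
          calc (nA + nB) * (fib k D E T).card
              ≤ (nA + nB) * nB.choose (k - T.card) := Nat.mul_le_mul_left _ dle
            _ ≤ nB * (nA + nB).choose (k - T.card) := by rw [hγ']; exact bin
            _ = nB * E.card.choose (k - T.card) := by rw [hEcard]
            _ ≤ nB * (fib k DB E T).card := Nat.mul_le_mul_left _ (lowB hPB)
            _ ≤ nA * (fib k DA E T).card + nB * (fib k DB E T).card := Nat.le_add_left _ _
        · -- neither
          have hemp : fib k D E T = ∅ := by
            rw [Finset.eq_empty_iff_forall_notMem]
            intro S hS
            obtain ⟨h1, h2, h3⟩ := mem_fib.1 hS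
            have hTS : T ⊆ S := h3 ▸ Finset.sdiff_subset
            have hTle : T.card ≤ S.card := Finset.card_le_card hTS
            have hcc := Finset.card_inter_add_card_sdiff S E
            rw [h3] at hcc
            have hne : (S ∩ E).Nonempty := Finset.card_pos.1 (by omega)
            obtain ⟨y, hy⟩ := hne
            obtain ⟨hyS, hyE⟩ := Finset.mem_inter.1 hy
            rcases (hE y).1 hyE with h | h
            · exact hPA (extA S hS y hyS h)
            · exact hPB (extB S hS y hyS h)
          rw [hemp]
          simp
      · -- k ≤ T.card
        push_neg at hTk
        have hTnotB : ∀ u ∈ T, u ∉ B := fun u hu h =>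
          (Finset.eq_empty_iff_forall_notMem.1 hTE u)
            (Finset.mem_inter.2 ⟨hu, (hE u).2 (Or.inr h)⟩)
        have hTnotA : ∀ u ∈ T, u ∉ A := fun u hu h =>
          (Finset.eq_empty_iff_forall_notMem.1 hTE u)
            (Finset.mem_inter.2 ⟨hu, (hE u).2 (Or.inl h)⟩)
        have e1 : fib k D E T = fib k DA E T := by
          apply fib_congr k D DA E T ?_ hTk
          intro u hu w hw
          simp [hDA, if_neg (hTnotB u hu), if_neg (hTnotB w hw)]
        have e2 : fib k D E T = fib k DB E T := by
          apply fib_congr k D DB E T ?_ hTk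
          intro u hu w hw
          simp [hDB, if_neg (hTnotA u hu), if_neg (hTnotA w hw)]
        rw [← e1, ← e2, ← Nat.add_mul]
    · -- T ∩ E ≠ ∅
      rw [fib_empty k D E T hTE, fib_empty k DA E T hTE, fib_empty k DB E T hTE]
      simp
  rw [starCount_eq_sum k D E, starCount_eq_sum k DA E, starCount_eq_sum k DB E]
  have h1 : (nA + nB) * ∑ T : Finset V, (fib k D E T).card ≤
      nA * ∑ T : Finset V, (fib k DA E T).card + nB * ∑ T : Finset V, (fib k DB E T).card := by
    rw [Finset.mul_sum, Finset.mul_sum, Finset.mul_sum, ← Finset.sum_add_distrib]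
    exact Finset.sum_le_sum (fun T _ => key T)
  have h2 : nA * ∑ T : Finset V, (fib k DA E T).card + nB * ∑ T : Finset V, (fib k DB E T).card ≤
      (nA + nB) * max (∑ T : Finset V, (fib k DA E T).card)
        (∑ T : Finset V, (fib k DB E T).card) := by
    rw [Nat.add_mul]
    exact Nat.add_le_add (Nat.mul_le_mul_left _ (le_max_left _ _))
      (Nat.mul_le_mul_left _ (le_max_right _ _))
  exact Nat.le_of_mul_le_mul_left (h1.trans h2) (by omega)
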